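/- Let $S=K[x_1,\dots,x_n,y_1,\dots,y_m]$ and $L=\sum_{i=1}^s I_{q_i}J_{r_i}$ a mixed product ideal with $0\le q_1<\dots<q_s\le n$, $0\le r_s<\dots<r_1\le m$. Then $L = \mathcal{P}_x \cap \mathcal{P}_{xy} \cap \mathcal{P}_y$, where $\mathcal{P}_x$ is the intersection of all primes generated by $n-q_1+1$ of the $x$-variables, $\mathcal{P}_y$ is the intersection of all primes generated by $m-r_s+1$ of the $y$-variables, and $\mathcal{P}_{xy} = \bigcap_{i=1}^{s-1}\bigcap_{X,Y} ((X)+(Y))$ where $X$ ranges over subsets of the $x$-variables of size $n-q_{i+1}+1$ and $Y$ over subsets of the $y$-variables of size $m-r_i+1$. -/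

import Mathlib

open MvPolynomial

/-- The squarefree Veronese ideal of degree `q` in the `x`-variables of
`K[x_1,…,x_n,y_1,…,y_m]` (`I_0 = S`, `I_q = (0)` for `q > n`). -/
noncomputable def mixedI (n m : ℕ) (K : Type*) [Field K] (q : ℕ) :
    Ideal (MvPolynomial (Fin n ⊕ Fin m) K) :=
  Ideal.span {p | ∃ A : Finset (Fin n), A.card = q ∧ p = ∏ i ∈ A, X (Sum.inl i)}

/-- The squarefree Veronese ideal of degree `r` in the `y`-variables. -/
noncomputable def mixedJ (n m : ℕ) (K : Type*) [Field K] (r : ℕ) :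
    Ideal (MvPolynomial (Fin n ⊕ Fin m) K) :=
  Ideal.span {p | ∃ B : Finset (Fin m), B.card = r ∧ p = ∏ j ∈ B, X (Sum.inr j)}

/-- The prime ideal generated by a set `A` of `x`-variables. -/
noncomputable def primeX (n m : ℕ) (K : Type*) [Field K] (A : Finset (Fin n)) :
    Ideal (MvPolynomial (Fin n ⊕ Fin m) K) :=
  Ideal.span {p | ∃ i ∈ A, p = X (Sum.inl i)}

/-- The prime ideal generated by a set `B` of `y`-variables. -/
noncomputable def primeY (n m : ℕ) (K : Type*) [Field K] (B : Finset (Fin m)) :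
    Ideal (MvPolynomial (Fin n ⊕ Fin m) K) :=
  Ideal.span {p | ∃ j ∈ B, p = X (Sum.inr j)}


lemma meets_iff {n q : ℕ} (hq : q ≤ n) (S : Finset (Fin n)) :
    (∀ A : Finset (Fin n), A.card = n - q + 1 → ∃ i ∈ A, i ∈ S) ↔ q ≤ S.card := by
  constructor
  · intro h
    by_contra hlt
    push_neg at hlt
    have hcompl : n - q + 1 ≤ Sᶜ.card := by
      rw [Finset.card_compl, Fintype.card_fin]; omega
    obtain ⟨A, hAsub, hAcard⟩ := Finset.exists_subset_card_eq hcompl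
    obtain ⟨i, hiA, hiS⟩ := h A hAcard
    exact (Finset.mem_compl.mp (hAsub hiA)) hiS
  · intro hS A hA
    by_contra hc
    push_neg at hc
    have hdisj : Disjoint A S := Finset.disjoint_left.mpr hc
    have hcard := Finset.card_union_of_disjoint hdisj
    have hle := Finset.card_le_univ (A ∪ S)
    have hfin : Fintype.card (Fin n) = n := Fintype.card_fin n
    omega

lemma meets_or_iff {n m q r : ℕ} (hq : q ≤ n) (hr : r ≤ m)
    (S : Finset (Fin n)) (T : Finset (Fin m)) :
    (∀ A : Finset (Fin n), A.card = n - q + 1 →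
      ∀ B : Finset (Fin m), B.card = m - r + 1 →
        ((∃ i ∈ A, i ∈ S) ∨ (∃ j ∈ B, j ∈ T))) ↔ q ≤ S.card ∨ r ≤ T.card := by
  constructor
  · intro h
    by_contra hc
    push_neg at hc
    obtain ⟨h1, h2⟩ := hc
    have h1 : ¬ (∀ A : Finset (Fin n), A.card = n - q + 1 → ∃ i ∈ A, i ∈ S) := by
      rw [meets_iff hq S]; omega
    have h2 : ¬ (∀ B : Finset (Fin m), B.card = m - r + 1 → ∃ j ∈ B, j ∈ T) := by
      rw [meets_iff hr T]; omega
    push_neg at h1 h2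
    obtain ⟨A, hA, hA'⟩ := h1
    obtain ⟨B, hB, hB'⟩ := h2
    rcases h A hA B hB with h' | h'
    · obtain ⟨i, hi, hi'⟩ := h'; exact hA' i hi hi'
    · obtain ⟨j, hj, hj'⟩ := h'; exact hB' j hj hj'
  · rintro (h | h) A hA B hB
    · exact Or.inl ((meets_iff hq S).mpr h A hA)
    · exact Or.inr ((meets_iff hr T).mpr h B hB)

lemma arith_iff (s : ℕ) (hs : 1 ≤ s) (q r : ℕ → ℕ)
    (hq : ∀ i j, i < j → j < s → q i < q j)
    (hr : ∀ i j, i < j → j < s → r j < r i) (a b : ℕ) :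
    (∃ i < s, q i ≤ a ∧ r i ≤ b) ↔
      (q 0 ≤ a ∧ (∀ i < s - 1, q (i + 1) ≤ a ∨ r i ≤ b) ∧ r (s - 1) ≤ b) := by
  have qmono : ∀ i j, i ≤ j → j < s → q i ≤ q j := by
    intro i j hij hj
    rcases hij.lt_or_eq with h | h
    · exact (hq i j h hj).le
    · exact h ▸ le_refl _
  have rmono : ∀ i j, i ≤ j → j < s → r j ≤ r i := by
    intro i j hij hj
    rcases hij.lt_or_eq with h | h
    · exact (hr i j h hj).le
    · exact h ▸ le_refl _
  constructor
  · rintro ⟨i, his, hqi, hri⟩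
    refine ⟨le_trans (qmono 0 i (Nat.zero_le _) his) hqi, ?_,
      le_trans (rmono i (s - 1) (by omega) (by omega)) hri⟩
    intro j hj
    rcases le_or_gt (j + 1) i with h | h
    · exact Or.inl (le_trans (qmono (j + 1) i h his) hqi)
    · exact Or.inr (le_trans (rmono i j (by omega) (by omega)) hri)
  · rintro ⟨h0, hmid, hlast⟩
    have h0' : (fun k => q k ≤ a) 0 := h0
    have hqi : q (Nat.findGreatest (fun k => q k ≤ a) (s - 1)) ≤ a :=
      Nat.findGreatest_spec (P := fun k => q k ≤ a) (Nat.zero_le _) h0'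
    set i := Nat.findGreatest (fun k => q k ≤ a) (s - 1) with hi
    have hile : i ≤ s - 1 := Nat.findGreatest_le _
    refine ⟨i, by omega, hqi, ?_⟩
    rcases eq_or_lt_of_le hile with h | h
    · exact h ▸ hlast
    · rcases hmid i h with hq' | hr'
      · have hng : ¬ ((fun k => q k ≤ a) (i + 1)) :=
          Nat.findGreatest_is_greatest (P := fun k => q k ≤ a) (n := s - 1) (by omega) (by omega)
        exact absurd hq' hng
      · exact hr'

section Aux
variable {n m : ℕ} {K : Type*} [Field K]

noncomputable def indA (m : ℕ) (A : Finset (Fin n)) : (Fin n ⊕ Fin m) →₀ ℕ :=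
  ∑ i ∈ A, Finsupp.single (Sum.inl i) 1

noncomputable def indB (n : ℕ) (B : Finset (Fin m)) : (Fin n ⊕ Fin m) →₀ ℕ :=
  ∑ j ∈ B, Finsupp.single (Sum.inr j) 1

lemma indA_inl (A : Finset (Fin n)) (i : Fin n) :
    indA m A (Sum.inl i) = if i ∈ A then 1 else 0 := by
  simp [indA, Finsupp.finset_sum_apply, Finsupp.single_apply]

lemma indA_inr (A : Finset (Fin n)) (j : Fin m) : indA m A (Sum.inr j) = 0 := by
  simp [indA, Finsupp.finset_sum_apply, Finsupp.single_apply]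

lemma indB_inr (B : Finset (Fin m)) (j : Fin m) :
    indB n B (Sum.inr j) = if j ∈ B then 1 else 0 := by
  simp [indB, Finsupp.finset_sum_apply, Finsupp.single_apply]

lemma indB_inl (B : Finset (Fin m)) (i : Fin n) : indB n B (Sum.inl i) = 0 := by
  simp [indB, Finsupp.finset_sum_apply, Finsupp.single_apply]

lemma prodX {σ α : Type*} (f : α → σ) (A : Finset α) :
    (∏ i ∈ A, (X (f i) : MvPolynomial σ K)) =
      monomial (∑ i ∈ A, Finsupp.single (f i) 1) 1 := by
  induction A using Finset.cons_induction with
  | empty => simp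
  | cons a A ha ih =>
      rw [Finset.prod_cons, Finset.sum_cons, ih, X, monomial_mul, mul_one]

lemma prod_eq (A : Finset (Fin n)) (B : Finset (Fin m)) :
    (∏ i ∈ A, (X (Sum.inl i) : MvPolynomial (Fin n ⊕ Fin m) K)) *
      (∏ j ∈ B, X (Sum.inr j)) = monomial (indA m A + indB n B) 1 := by
  rw [prodX, prodX, monomial_mul, mul_one, indA, indB]

/-- number of `x`-variables appearing in exponent vector `d` -/
noncomputable def xs (d : (Fin n ⊕ Fin m) →₀ ℕ) : Finset (Fin n) :=
  Finset.univ.filter fun i => d (Sum.inl i) ≠ 0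

noncomputable def ys (d : (Fin n ⊕ Fin m) →₀ ℕ) : Finset (Fin m) :=
  Finset.univ.filter fun j => d (Sum.inr j) ≠ 0

lemma ind_le_iff (A : Finset (Fin n)) (B : Finset (Fin m)) (d : (Fin n ⊕ Fin m) →₀ ℕ) :
    indA m A + indB n B ≤ d ↔ A ⊆ xs d ∧ B ⊆ ys d := by
  rw [Finsupp.le_def]
  constructor
  · intro h
    constructor
    · intro i hi
      have := h (Sum.inl i)
      rw [Finsupp.add_apply, indA_inl, indB_inl, if_pos hi] at this
      simp only [xs, Finset.mem_filter, Finset.mem_univ, true_and]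
      omega
    · intro j hj
      have := h (Sum.inr j)
      rw [Finsupp.add_apply, indA_inr, indB_inr, if_pos hj] at this
      simp only [ys, Finset.mem_filter, Finset.mem_univ, true_and]
      omega
  · rintro ⟨h1, h2⟩ k
    cases k with
    | inl i =>
      rw [Finsupp.add_apply, indA_inl, indB_inl]
      by_cases hi : i ∈ A
      · have := h1 hi
        simp only [xs, Finset.mem_filter, Finset.mem_univ, true_and] at this
        simp [hi]; omega
      · simp [hi]
    | inr j =>
      rw [Finsupp.add_apply, indA_inr, indB_inr]
      by_cases hj : j ∈ B
      · have := h2 hj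
        simp only [ys, Finset.mem_filter, Finset.mem_univ, true_and] at this
        simp [hj]; omega
      · simp [hj]

lemma IJ_eq (qv rv : ℕ) : mixedI n m K qv * mixedJ n m K rv =
    Ideal.span ((fun e => monomial e (1 : K)) ''
      {e | ∃ A : Finset (Fin n), A.card = qv ∧ ∃ B : Finset (Fin m), B.card = rv ∧
        e = indA m A + indB n B}) := by
  rw [mixedI, mixedJ, Ideal.span_mul_span]
  congr 1
  ext p
  simp only [Set.mem_iUnion, Set.mem_setOf_eq, Set.mem_image, Set.mem_singleton_iff]
  constructor
  · rintro ⟨a, ⟨A, hA, rfl⟩, b, ⟨B, hB, rfl⟩, rfl⟩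
    exact ⟨indA m A + indB n B, ⟨A, hA, B, hB, rfl⟩, (prod_eq A B).symm⟩
  · rintro ⟨e, ⟨A, hA, B, hB, rfl⟩, rfl⟩
    exact ⟨_, ⟨A, hA, rfl⟩, _, ⟨B, hB, rfl⟩, (prod_eq A B)⟩

lemma mem_L (s : ℕ) (q r : ℕ → ℕ) (p : MvPolynomial (Fin n ⊕ Fin m) K) :
    p ∈ (∑ i ∈ Finset.range s, mixedI n m K (q i) * mixedJ n m K (r i)) ↔
      ∀ d ∈ p.support, ∃ i < s, q i ≤ (xs d).card ∧ r i ≤ (ys d).card := by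
  have hL : (∑ i ∈ Finset.range s, mixedI n m K (q i) * mixedJ n m K (r i)) =
      Ideal.span ((fun e => monomial e (1 : K)) ''
        {e | ∃ i < s, ∃ A : Finset (Fin n), A.card = q i ∧ ∃ B : Finset (Fin m),
          B.card = r i ∧ e = indA m A + indB n B}) := by
    have hsets : {e : (Fin n ⊕ Fin m) →₀ ℕ | ∃ i < s, ∃ A : Finset (Fin n),
        A.card = q i ∧ ∃ B : Finset (Fin m), B.card = r i ∧ e = indA m A + indB n B} =
        ⋃ i ∈ Finset.range s, {e | ∃ A : Finset (Fin n), A.card = q i ∧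
          ∃ B : Finset (Fin m), B.card = r i ∧ e = indA m A + indB n B} := by
      ext e
      simp only [Set.mem_iUnion, Set.mem_setOf_eq, Finset.mem_range]
      exact exists_congr fun i => exists_prop.symm
    rw [hsets, Set.image_iUnion₂, Ideal.sum_eq_sup, Finset.sup_eq_iSup]
    simp only [IJ_eq]
    show _ = Submodule.span _ _
    rw [Submodule.span_iUnion₂]
  rw [hL, mem_ideal_span_monomial_image]
  apply forall₂_congr
  intro d _
  constructor
  · rintro ⟨e, ⟨i, his, A, hA, B, hB, rfl⟩, hle⟩
    obtain ⟨h1, h2⟩ := (ind_le_iff A B d).mp hle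
    exact ⟨i, his, hA ▸ Finset.card_le_card h1, hB ▸ Finset.card_le_card h2⟩
  · rintro ⟨i, his, h1, h2⟩
    obtain ⟨A, hAsub, hAcard⟩ := Finset.exists_subset_card_eq h1
    obtain ⟨B, hBsub, hBcard⟩ := Finset.exists_subset_card_eq h2
    exact ⟨indA m A + indB n B, ⟨i, his, A, hAcard, B, hBcard, rfl⟩,
      (ind_le_iff A B d).mpr ⟨hAsub, hBsub⟩⟩

lemma primeX_eq (A : Finset (Fin n)) :
    primeX n m K A = Ideal.span (X '' (Sum.inl '' (A : Set (Fin n)))) := by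
  rw [primeX]
  congr 1
  ext p
  simp only [Set.mem_setOf_eq, Set.mem_image, Finset.mem_coe]
  constructor
  · rintro ⟨i, hi, rfl⟩
    exact ⟨Sum.inl i, ⟨i, hi, rfl⟩, rfl⟩
  · rintro ⟨k, ⟨i, hi, rfl⟩, rfl⟩
    exact ⟨i, hi, rfl⟩

lemma primeY_eq (B : Finset (Fin m)) :
    primeY n m K B = Ideal.span (X '' (Sum.inr '' (B : Set (Fin m)))) := by
  rw [primeY]
  congr 1
  ext p
  simp only [Set.mem_setOf_eq, Set.mem_image, Finset.mem_coe]
  constructor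
  · rintro ⟨j, hj, rfl⟩
    exact ⟨Sum.inr j, ⟨j, hj, rfl⟩, rfl⟩
  · rintro ⟨k, ⟨j, hj, rfl⟩, rfl⟩
    exact ⟨j, hj, rfl⟩

lemma mem_primeX (A : Finset (Fin n)) (p : MvPolynomial (Fin n ⊕ Fin m) K) :
    p ∈ primeX n m K A ↔ ∀ d ∈ p.support, ∃ i ∈ A, i ∈ xs d := by
  rw [primeX_eq, mem_ideal_span_X_image]
  apply forall₂_congr
  intro d _
  constructor
  · rintro ⟨k, ⟨i, hi, rfl⟩, hk⟩
    exact ⟨i, hi, by simp [xs, hk]⟩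
  · rintro ⟨i, hi, hk⟩
    simp only [xs, Finset.mem_filter, Finset.mem_univ, true_and] at hk
    exact ⟨Sum.inl i, ⟨i, hi, rfl⟩, hk⟩

lemma mem_primeY (B : Finset (Fin m)) (p : MvPolynomial (Fin n ⊕ Fin m) K) :
    p ∈ primeY n m K B ↔ ∀ d ∈ p.support, ∃ j ∈ B, j ∈ ys d := by
  rw [primeY_eq, mem_ideal_span_X_image]
  apply forall₂_congr
  intro d _
  constructor
  · rintro ⟨k, ⟨j, hj, rfl⟩, hk⟩
    exact ⟨j, hj, by simp [ys, hk]⟩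
  · rintro ⟨j, hj, hk⟩
    simp only [ys, Finset.mem_filter, Finset.mem_univ, true_and] at hk
    exact ⟨Sum.inr j, ⟨j, hj, rfl⟩, hk⟩

lemma mem_primeXY (A : Finset (Fin n)) (B : Finset (Fin m))
    (p : MvPolynomial (Fin n ⊕ Fin m) K) :
    p ∈ primeX n m K A ⊔ primeY n m K B ↔
      ∀ d ∈ p.support, (∃ i ∈ A, i ∈ xs d) ∨ (∃ j ∈ B, j ∈ ys d) := by
  rw [primeX_eq, primeY_eq, ← Ideal.span_union, ← Set.image_union, mem_ideal_span_X_image]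
  apply forall₂_congr
  intro d _
  constructor
  · rintro ⟨k, hk, hk'⟩
    rcases hk with ⟨i, hi, rfl⟩ | ⟨j, hj, rfl⟩
    · exact Or.inl ⟨i, hi, by simp [xs, hk']⟩
    · exact Or.inr ⟨j, hj, by simp [ys, hk']⟩
  · rintro (⟨i, hi, hk⟩ | ⟨j, hj, hk⟩)
    · simp only [xs, Finset.mem_filter, Finset.mem_univ, true_and] at hk
      exact ⟨Sum.inl i, Or.inl ⟨i, hi, rfl⟩, hk⟩
    · simp only [ys, Finset.mem_filter, Finset.mem_univ, true_and] at hk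
      exact ⟨Sum.inr j, Or.inr ⟨j, hj, rfl⟩, hk⟩

end Aux

/-- (Corollary 3.3: primary decomposition of a mixed product ideal.)
`∑ I_{q_i} J_{r_i} = 𝒫_x ⊓ 𝒫_{xy} ⊓ 𝒫_y`, where `𝒫_x` is the intersection of
all primes generated by `n - q_1 + 1` of the `x`-variables, `𝒫_y` the
intersection of all primes generated by `m - r_s + 1` of the `y`-variables,
and `𝒫_{xy} = ⋂_{i=1}^{s-1} ⋂_{X,Y} ((X) + (Y))` with `|X| = n - q_{i+1} + 1`,
`|Y| = m - r_i + 1`.  (Indices are shifted so that `i = 0,…,s-1`.) -/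
theorem mixed_product_primary_decomposition (n m : ℕ) (K : Type*) [Field K]
    (s : ℕ) (hs : 1 ≤ s) (q r : ℕ → ℕ)
    (hq : ∀ i j, i < j → j < s → q i < q j)
    (hr : ∀ i j, i < j → j < s → r j < r i)
    (hqn : q (s - 1) ≤ n) (hrm : r 0 ≤ m)
    (hproper : (∑ i ∈ Finset.range s, mixedI n m K (q i) * mixedJ n m K (r i)) ≠ ⊤) :
    (∑ i ∈ Finset.range s, mixedI n m K (q i) * mixedJ n m K (r i)) =
      (⨅ (A : Finset (Fin n)) (_ : A.card = n - q 0 + 1), primeX n m K A) ⊓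
      (⨅ (i : ℕ) (_ : i < s - 1) (A : Finset (Fin n)) (_ : A.card = n - q (i + 1) + 1)
          (B : Finset (Fin m)) (_ : B.card = m - r i + 1),
            primeX n m K A ⊔ primeY n m K B) ⊓
      (⨅ (B : Finset (Fin m)) (_ : B.card = m - r (s - 1) + 1), primeY n m K B) := by
  have qmono : ∀ i j, i ≤ j → j < s → q i ≤ q j := by
    intro i j hij hj
    rcases hij.lt_or_eq with h | h
    · exact (hq i j h hj).le
    · exact h ▸ le_refl _
  have rmono : ∀ i j, i ≤ j → j < s → r j ≤ r i := by
    intro i j hij hj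
    rcases hij.lt_or_eq with h | h
    · exact (hr i j h hj).le
    · exact h ▸ le_refl _
  have qbound : ∀ i, i < s → q i ≤ n := fun i hi =>
    le_trans (qmono i (s - 1) (by omega) (by omega)) hqn
  have rbound : ∀ i, i < s → r i ≤ m := fun i hi =>
    le_trans (rmono 0 i (Nat.zero_le _) hi) hrm
  have key : ∀ d : (Fin n ⊕ Fin m) →₀ ℕ,
      ((∃ i < s, q i ≤ (xs d).card ∧ r i ≤ (ys d).card) ↔
        ((∀ A : Finset (Fin n), A.card = n - q 0 + 1 → ∃ i ∈ A, i ∈ xs d) ∧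
         (∀ i < s - 1, ∀ A : Finset (Fin n), A.card = n - q (i + 1) + 1 →
            ∀ B : Finset (Fin m), B.card = m - r i + 1 →
              ((∃ i' ∈ A, i' ∈ xs d) ∨ (∃ j ∈ B, j ∈ ys d))) ∧
         (∀ B : Finset (Fin m), B.card = m - r (s - 1) + 1 → ∃ j ∈ B, j ∈ ys d))) := by
    intro d
    rw [arith_iff s hs q r hq hr]
    rw [meets_iff (qbound 0 (by omega)) (xs d), meets_iff (rbound (s - 1) (by omega)) (ys d)]
    refine and_congr Iff.rfl (and_congr ?_ Iff.rfl)
    refine forall_congr' fun i => imp_congr_right fun hi => ?_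
    exact (meets_or_iff (qbound (i + 1) (by omega)) (rbound i (by omega)) (xs d) (ys d)).symm
  ext p
  rw [mem_L]
  simp only [Submodule.mem_inf, Submodule.mem_iInf, mem_primeX, mem_primeY, mem_primeXY]
  constructor
  · intro h
    refine ⟨⟨fun A hA d hd => ((key d).mp (h d hd)).1 A hA,
      fun i hi A hA B hB d hd => ((key d).mp (h d hd)).2.1 i hi A hA B hB⟩,
      fun B hB d hd => ((key d).mp (h d hd)).2.2 B hB⟩
  · rintro ⟨⟨h1, h2⟩, h3⟩ d hd
    exact (key d).mpr ⟨fun A hA => h1 A hA d hd,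
      fun i hi A hA B hB => h2 i hi A hA B hB d hd, fun B hB => h3 B hB d hd⟩
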